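/- arXiv:2210.05640 — 3 statements merged into one kernel-verified Lean document; each statement's English description precedes it below -/
import Mathlib

section
/- (Infinite biproduct recognition) Let D be a preadditive category in which every object is a filtered colimit of compact objects. Suppose given πᵢ : Y → Yᵢ and σᵢ : Yᵢ → Y (i ranging over an arbitrary index set I) such that (i) πᵢ∘σⱼ = δᵢⱼ id; (ii) for each compact K, Hom(K, Yᵢ) = 0 for all but finitely many i; (iii) for each compact K and each f : K → Y, f = Σᵢ σᵢ∘πᵢ∘f. Then the maps exhibit Y as both the product and the coproduct of the Yᵢ. -/
/-!
STATEMENT 7 (Infinite biproduct recognition): Let `D` be a preadditive category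
in which every object is a filtered colimit of compact objects (an object `K` is
compact when `Hom(K, −) = coyoneda.obj (op K)` preserves filtered colimits).
Given `πᵢ : Y → Yᵢ` and `σᵢ : Yᵢ → Y` (`i ∈ I` arbitrary) with
(i)   `πᵢ ∘ σⱼ = δᵢⱼ id`,
(ii)  for each compact `K`, `Hom(K, Yᵢ) = 0` for all but finitely many `i`,
(iii) for each compact `K` and `f : K → Y`, `f = Σᵢ σᵢ ∘ πᵢ ∘ f` (a finite sum),
then the `πᵢ` exhibit `Y` as the product of the `Yᵢ` and the `σᵢ` exhibit `Y`
as their coproduct.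
-/

open CategoryTheory CategoryTheory.Limits Opposite

/-- An object is compact if its covariant hom functor preserves filtered colimits. -/
abbrev IsCompactObj {D : Type*} [Category D] (K : D) : Prop :=
  Nonempty (PreservesFilteredColimits (coyoneda.obj (op K)))

private lemma compact_factor {D : Type u} [Category.{v} D] {J : Type v} [SmallCategory J]
    [IsFiltered J] {F : J ⥤ D} {c : Cocone F} (hc : IsColimit c) (K : D)
    (hK : IsCompactObj K) (h : K ⟶ c.pt) :
    ∃ (j : J) (h' : K ⟶ F.obj j), h' ≫ c.ι.app j = h := by
  obtain ⟨P⟩ := hK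
  haveI := P
  obtain ⟨j, y, hy⟩ :=
    Types.jointly_surjective _ (isColimitOfPreserves (coyoneda.obj (op K)) hc) h
  exact ⟨j, y, hy⟩

theorem statement7 {D : Type u} [Category.{v} D] [Preadditive D]
    -- every object is a filtered colimit of compact objects:
    (hgen : ∀ Z : D, ∃ (J : Type v) (_ : SmallCategory J) (_ : IsFiltered J)
      (F : J ⥤ D) (c : Cocone F), Nonempty (IsColimit c) ∧
        (∀ j : J, IsCompactObj (F.obj j)) ∧ c.pt = Z)
    {I : Type w} (X : I → D) (Y : D) (σ : ∀ i, X i ⟶ Y) (π : ∀ i, Y ⟶ X i)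
    (h1a : ∀ i, σ i ≫ π i = 𝟙 (X i))
    (h1b : ∀ i j, i ≠ j → σ i ≫ π j = 0)
    (h2 : ∀ K : D, IsCompactObj K → {i : I | ∃ f : K ⟶ X i, f ≠ 0}.Finite)
    (h3 : ∀ K : D, IsCompactObj K → ∀ f : K ⟶ Y,
      ∃ S : Finset I, f = ∑ i ∈ S, f ≫ π i ≫ σ i) :
    Nonempty (IsLimit (Fan.mk Y π)) ∧ Nonempty (IsColimit (Cofan.mk Y σ)) := by
  classical
  -- maps to `X i` from a compact object vanish outside the finite support set
  have hz : ∀ (K : D) (hK : IsCompactObj K) (i : I), i ∉ (h2 K hK).toFinset →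
      ∀ t : K ⟶ X i, t = 0 := by
    intro K hK i hi t
    by_contra hne
    exact hi ((h2 K hK).mem_toFinset.mpr ⟨t, hne⟩)
  -- composing a finite sum of `σ`-terms with `π k`
  have comp_pi : ∀ {K : D} (S : Finset I) (t : ∀ i, K ⟶ X i) (k : I),
      (∑ i ∈ S, t i ≫ σ i) ≫ π k = if k ∈ S then t k else 0 := by
    intro K S t k
    rw [Preadditive.sum_comp]
    by_cases hk : k ∈ S
    · rw [if_pos hk, Finset.sum_eq_single_of_mem k hk]
      · rw [Category.assoc, h1a, Category.comp_id]
      · intro i _ hik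
        rw [Category.assoc, h1b i k hik, comp_zero]
    · rw [if_neg hk]
      apply Finset.sum_eq_zero
      intro i hi
      rw [Category.assoc, h1b i k (by rintro rfl; exact hk hi), comp_zero]
  -- maps from compacts into `Y` are determined by their `π`-components
  have keyext : ∀ (K : D), IsCompactObj K → ∀ g g' : K ⟶ Y,
      (∀ i, g ≫ π i = g' ≫ π i) → g = g' := by
    intro K hK g g' hgg
    obtain ⟨S, hS⟩ := h3 K hK (g - g')
    have : g - g' = 0 := by
      rw [hS]
      apply Finset.sum_eq_zero
      intro i _
      rw [← Category.assoc, Preadditive.sub_comp, hgg, sub_self, zero_comp]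
    exact sub_eq_zero.mp this
  -- refined version of h3: any finset containing the support works
  have keysum : ∀ (K : D), IsCompactObj K → ∀ (h : K ⟶ Y) (S : Finset I),
      (∀ i ∉ S, h ≫ π i = 0) → h = ∑ i ∈ S, (h ≫ π i) ≫ σ i := by
    intro K hK h S hout
    obtain ⟨S', hS'⟩ := h3 K hK h
    simp only [← Category.assoc] at hS'
    have hout' : ∀ i ∉ S', h ≫ π i = 0 := by
      intro k hk
      conv_lhs => rw [hS']
      rw [comp_pi, if_neg hk]
    have e1 : ∑ i ∈ S, (h ≫ π i) ≫ σ i = ∑ i ∈ S ∪ S', (h ≫ π i) ≫ σ i :=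
      Finset.sum_subset Finset.subset_union_left
        (fun i _ hi => by rw [hout i hi, zero_comp])
    have e2 : ∑ i ∈ S', (h ≫ π i) ≫ σ i = ∑ i ∈ S ∪ S', (h ≫ π i) ≫ σ i :=
      Finset.sum_subset Finset.subset_union_right
        (fun i _ hi => by rw [hout' i hi, zero_comp])
    conv_lhs => rw [hS']
    rw [e2, ← e1]
  -- maps into `Y` are determined by their `π`-components, in general
  have uniqY : ∀ (T : D) (g g' : T ⟶ Y), (∀ i, g ≫ π i = g' ≫ π i) → g = g' := by
    intro T g g' hgg
    obtain ⟨J, iJ, fJ, F, c, ⟨hc⟩, hcomp, rfl⟩ := hgen T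
    exact hc.hom_ext fun j => keyext _ (hcomp j) _ _ (fun i => by
      rw [Category.assoc, Category.assoc, hgg i])
  constructor
  · -- the product part
    have exlift : ∀ (T : D) (f : ∀ i, T ⟶ X i), ∃ g : T ⟶ Y, ∀ i, g ≫ π i = f i := by
      intro T f
      obtain ⟨J, iJ, fJ, F, c, ⟨hc⟩, hcomp, rfl⟩ := hgen T
      let gj : ∀ j, F.obj j ⟶ Y := fun j =>
        ∑ i ∈ (h2 (F.obj j) (hcomp j)).toFinset, (c.ι.app j ≫ f i) ≫ σ i
      have hgπ : ∀ j i, gj j ≫ π i = c.ι.app j ≫ f i := by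
        intro j i
        show (∑ i ∈ (h2 (F.obj j) (hcomp j)).toFinset, (c.ι.app j ≫ f i) ≫ σ i) ≫ π i
          = c.ι.app j ≫ f i
        rw [comp_pi]
        by_cases hi : i ∈ (h2 (F.obj j) (hcomp j)).toFinset
        · rw [if_pos hi]
        · rw [if_neg hi, hz _ (hcomp j) i hi (c.ι.app j ≫ f i)]
      let d : Cocone F :=
        { pt := Y
          ι :=
            { app := gj
              naturality := by
                intro j j' φ
                simp only [Functor.const_obj_obj, Functor.const_obj_map, Category.comp_id]
                refine keyext _ (hcomp j) _ _ (fun i => ?_)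
                rw [Category.assoc, hgπ j' i, hgπ j i, ← Category.assoc, c.w φ] } }
      refine ⟨hc.desc d, fun i => hc.hom_ext fun j => ?_⟩
      rw [← Category.assoc, hc.fac d j]
      exact hgπ j i
    refine ⟨mkFanLimit _ (fun s => (exlift s.pt (fun i => s.proj i)).choose)
      (fun s i => ?_) (fun s m hm => ?_)⟩
    · simpa using (exlift s.pt (fun i => s.proj i)).choose_spec i
    · refine uniqY _ m _ (fun i => ?_)
      rw [(exlift s.pt (fun i => s.proj i)).choose_spec i]
      simpa using hm i
  · -- the coproduct part
    obtain ⟨J, iJ, fJ, F, c, ⟨hc⟩, hcomp, hpt⟩ := hgen Y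
    subst hpt
    -- compact objects mapping into the colimit factor through a stage
    have factor : ∀ (K : D), IsCompactObj K → ∀ h : K ⟶ c.pt,
        ∃ (j : J) (h' : K ⟶ F.obj j), h' ≫ c.ι.app j = h :=
      fun K hK h => @compact_factor D _ J iJ fJ F c hc K hK h
    have couniq : ∀ (T : D) (g g' : c.pt ⟶ T),
        (∀ i, σ i ≫ g = σ i ≫ g') → g = g' := by
      intro T g g' hgg
      refine hc.hom_ext fun j => ?_
      have e := keysum (F.obj j) (hcomp j) (c.ι.app j) ((h2 _ (hcomp j)).toFinset)
        (fun i hi => hz _ (hcomp j) i hi _)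
      rw [e, Preadditive.sum_comp, Preadditive.sum_comp]
      exact Finset.sum_congr rfl fun i _ => by
        simp only [Category.assoc, hgg i]
    have exdesc : ∀ (T : D) (f : ∀ i, X i ⟶ T), ∃ g : c.pt ⟶ T, ∀ i, σ i ≫ g = f i := by
      intro T f
      let S : J → Finset I := fun j => (h2 (F.obj j) (hcomp j)).toFinset
      let gj : ∀ j, F.obj j ⟶ T := fun j => ∑ i ∈ S j, (c.ι.app j ≫ π i) ≫ f i
      let d : Cocone F :=
        { pt := T
          ι :=
            { app := gj
              naturality := by
                intro j j' φ
                simp only [Functor.const_obj_obj, Functor.const_obj_map, Category.comp_id]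
                show F.map φ ≫ gj j' = gj j
                calc F.map φ ≫ gj j'
                    = ∑ i ∈ S j', (c.ι.app j ≫ π i) ≫ f i := by
                      show F.map φ ≫ ∑ i ∈ S j', (c.ι.app j' ≫ π i) ≫ f i = _
                      rw [Preadditive.comp_sum]
                      refine Finset.sum_congr rfl fun i _ => ?_
                      rw [← c.w φ]
                      simp only [Category.assoc]
                  _ = ∑ i ∈ S j ∪ S j', (c.ι.app j ≫ π i) ≫ f i :=
                      Finset.sum_subset Finset.subset_union_right (fun i _ hi => by
                        rw [← c.w φ, Category.assoc (F.map φ) (c.ι.app j') (π i),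
                          hz _ (hcomp j') i hi (c.ι.app j' ≫ π i), comp_zero, zero_comp])
                  _ = ∑ i ∈ S j, (c.ι.app j ≫ π i) ≫ f i :=
                      (Finset.sum_subset Finset.subset_union_left (fun i _ hi => by
                        rw [hz _ (hcomp j) i hi (c.ι.app j ≫ π i), zero_comp])).symm } }
      refine ⟨hc.desc d, fun i => ?_⟩
      -- key computation: composing a map from a compact object with the descent
      have L : ∀ (K : D) (hK : IsCompactObj K) (h : K ⟶ c.pt) (S' : Finset I),
          (∀ i' ∉ S', h ≫ π i' = 0) →
          h ≫ hc.desc d = ∑ i' ∈ S', (h ≫ π i') ≫ f i' := by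
        intro K hK h S' hS'
        obtain ⟨j, h', rfl⟩ := factor K hK h
        rw [Category.assoc, hc.fac d j]
        show h' ≫ gj j = _
        have e0 : h' ≫ gj j = ∑ i' ∈ S j, ((h' ≫ c.ι.app j) ≫ π i') ≫ f i' := by
          show h' ≫ ∑ i' ∈ S j, (c.ι.app j ≫ π i') ≫ f i' = _
          rw [Preadditive.comp_sum]
          exact Finset.sum_congr rfl fun i' _ => by simp only [Category.assoc]
        rw [e0,
          Finset.sum_subset (Finset.subset_union_left : S j ⊆ S j ∪ S') (fun i' _ hi' => by
            rw [Category.assoc h' (c.ι.app j) (π i'),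
              hz _ (hcomp j) i' hi' (c.ι.app j ≫ π i'), comp_zero, zero_comp]),
          ← Finset.sum_subset (Finset.subset_union_right : S' ⊆ S j ∪ S') (fun i' _ hi' => by
            rw [hS' i' hi', zero_comp])]
      -- now prove `σ i ≫ desc = f i` using a compact presentation of `X i`
      obtain ⟨J2, iJ2, fJ2, F2, c2, ⟨hc2⟩, hcomp2, hpt2⟩ := hgen (X i)
      rw [← cancel_epi (eqToHom hpt2)]
      refine hc2.hom_ext fun m => ?_
      have hL := L (F2.obj m) (hcomp2 m) ((c2.ι.app m ≫ eqToHom hpt2) ≫ σ i)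
        ((h2 _ (hcomp2 m)).toFinset) (fun i' hi' => hz _ (hcomp2 m) i' hi' _)
      by_cases hi : i ∈ (h2 (F2.obj m) (hcomp2 m)).toFinset
      · rw [Finset.sum_eq_single_of_mem i hi
          (fun i' _ hne => by
            simp only [Category.assoc, reassoc_of% (h1b i i' (Ne.symm hne)),
              zero_comp, comp_zero])] at hL
        simp only [Category.assoc, reassoc_of% (h1a i), Category.id_comp] at hL
        simpa only [Category.assoc] using hL
      · have hzero : c2.ι.app m ≫ eqToHom hpt2 = 0 :=
          hz _ (hcomp2 m) i hi (c2.ι.app m ≫ eqToHom hpt2)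
        simp only [← Category.assoc, hzero, zero_comp]
    refine ⟨mkCofanColimit _ (fun t => (exdesc t.pt (fun i => t.inj i)).choose)
      (fun t i => ?_) (fun t m hm => ?_)⟩
    · simpa using (exdesc t.pt (fun i => t.inj i)).choose_spec i
    · refine couniq _ m _ (fun i => ?_)
      rw [(exdesc t.pt (fun i => t.inj i)).choose_spec i]
      simpa using hm i
end

section
/- Let e ∈ K[Sₙ] be the symmetrizing idempotent (char K = 0) acting on A = K[x₁,…,xₙ]/(xᵢ²) via the signed permutation action (permuting s_i = (-1)^{i-1}x_i). Then the image e·A equals the invariant subalgebra K[z]/(z^{n+1}) where z = Σ s_i, and e acts as the identity on this subalgebra; in particular e·A has dimension n+1 over K. -/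
/-!
STATEMENT 14: Let `e = (1/n!) Σ_{w ∈ Sₙ} w` be the symmetrizing idempotent
(char K = 0) acting on `A = K[x₁,…,xₙ]/(xᵢ²)` via the signed permutation action
(permuting `s_i = (-1)^{i-1}x_i`).  Then the image `e·A` equals the invariant
subalgebra `K[z]/(z^{n+1})` generated by `z = Σ s_i`, `e` acts as the identity on
this subalgebra, and `e·A` has dimension `n+1` over `K`.

(The averaging operator is realized on representatives: `eLift p` is the class of
`(1/n!) Σ_w w·p`; since the quotient map is surjective, its range is `e·A`.)
-/

open MvPolynomial Finset
set_option maxHeartbeats 1600000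

noncomputable def sqIdeal (K : Type*) [CommRing K] (n : ℕ) : Ideal (MvPolynomial (Fin n) K) :=
  Ideal.span (Set.range fun i : Fin n => (MvPolynomial.X i) ^ 2)

abbrev Asq (K : Type*) [CommRing K] (n : ℕ) : Type _ :=
  MvPolynomial (Fin n) K ⧸ sqIdeal K n

noncomputable def sVar (K : Type*) [CommRing K] (n : ℕ) (i : Fin n) : Asq K n :=
  Ideal.Quotient.mk (sqIdeal K n) (((-1 : MvPolynomial (Fin n) K) ^ (i : ℕ)) * MvPolynomial.X i)

noncomputable def zAlt (K : Type*) [CommRing K] (n : ℕ) : Asq K n := ∑ i : Fin n, sVar K n i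

/-- The signed permutation action on the polynomial ring: `w` sends `s_i` to `s_{w(i)}`,
i.e. `x_i ↦ (-1)^{i + w(i)} x_{w(i)}`. -/
noncomputable def sgnAct (K : Type*) [CommRing K] (n : ℕ) (w : Equiv.Perm (Fin n)) :
    MvPolynomial (Fin n) K →ₐ[K] MvPolynomial (Fin n) K :=
  MvPolynomial.aeval fun i : Fin n =>
    ((-1 : MvPolynomial (Fin n) K) ^ ((i : ℕ) + ((w i : Fin n) : ℕ))) * MvPolynomial.X (w i)

/-- The symmetrizing idempotent `e = (1/n!) Σ_w w`, as a linear map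
from representatives to `A` (composing with the surjection `mk` realizes `e : A → A`). -/
noncomputable def eLift (K : Type*) [Field K] (n : ℕ) :
    MvPolynomial (Fin n) K →ₗ[K] Asq K n :=
  ((n.factorial : K)⁻¹) •
    ∑ w : Equiv.Perm (Fin n),
      (Ideal.Quotient.mkₐ K (sqIdeal K n)).toLinearMap.comp (sgnAct K n w).toLinearMap


section Aux

variable {K : Type*} [Field K] {n : ℕ}

lemma sgnAct_s (w : Equiv.Perm (Fin n)) (i : Fin n) :
    sgnAct K n w ((-1) ^ (i : ℕ) * X i) = (-1) ^ ((w i : ℕ)) * X (w i) := by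
  rw [sgnAct, map_mul, map_pow, map_neg, map_one, aeval_X, ← mul_assoc, ← pow_add,
    show (i : ℕ) + ((i : ℕ) + (w i : ℕ)) = 2 * (i : ℕ) + (w i : ℕ) by omega,
    pow_add, pow_mul, neg_one_sq, one_pow, one_mul]

lemma sgnAct_mem_sqIdeal (w : Equiv.Perm (Fin n)) {p : MvPolynomial (Fin n) K}
    (hp : p ∈ sqIdeal K n) : sgnAct K n w p ∈ sqIdeal K n := by
  have hmap : Ideal.map (sgnAct K n w).toRingHom (sqIdeal K n) ≤ sqIdeal K n := by
    rw [sqIdeal, Ideal.map_span, Ideal.span_le]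
    rintro _ ⟨_, ⟨i, rfl⟩, rfl⟩
    have : (sgnAct K n w).toRingHom (X i ^ 2) = X (w i) ^ 2 := by
      simp only [AlgHom.toRingHom_eq_coe, RingHom.coe_coe, map_pow, sgnAct, aeval_X,
        mul_pow, ← pow_mul]
      rw [show ((i:ℕ) + (w i : ℕ)) * 2 = 2 * ((i:ℕ) + (w i : ℕ)) by ring, pow_mul,
        neg_one_sq, one_pow, one_mul]
    rw [this]
    exact Ideal.subset_span ⟨w i, rfl⟩
  exact hmap (Ideal.mem_map_of_mem _ hp)

lemma eLift_apply (p : MvPolynomial (Fin n) K) :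
    eLift K n p = ((n.factorial : K)⁻¹) •
      ∑ w : Equiv.Perm (Fin n), Ideal.Quotient.mk (sqIdeal K n) (sgnAct K n w p) := by
  simp [eLift, LinearMap.sum_apply]

lemma eLift_eq_zero_of_mem {p : MvPolynomial (Fin n) K} (hp : p ∈ sqIdeal K n) :
    eLift K n p = 0 := by
  rw [eLift_apply]
  rw [Finset.sum_eq_zero, smul_zero]
  intro w _
  exact Ideal.Quotient.eq_zero_iff_mem.2 (sgnAct_mem_sqIdeal w hp)

lemma eLift_congr {p q : MvPolynomial (Fin n) K}
    (h : Ideal.Quotient.mk (sqIdeal K n) p = Ideal.Quotient.mk (sqIdeal K n) q) :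
    eLift K n p = eLift K n q := by
  have := eLift_eq_zero_of_mem (Ideal.Quotient.eq.1 h)
  rw [map_sub, sub_eq_zero] at this
  exact this

noncomputable def zPoly (K : Type*) [Field K] (n : ℕ) : MvPolynomial (Fin n) K :=
  ∑ i : Fin n, (-1) ^ (i : ℕ) * X i

lemma mk_zPoly : Ideal.Quotient.mk (sqIdeal K n) (zPoly K n) = zAlt K n := by
  simp [zPoly, zAlt, sVar, map_sum]

lemma sgnAct_zPoly (w : Equiv.Perm (Fin n)) : sgnAct K n w (zPoly K n) = zPoly K n := by
  rw [zPoly, map_sum]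
  simp_rw [sgnAct_s]
  exact Equiv.sum_comp w (fun j => (-1) ^ (j : ℕ) * X j)

lemma eLift_zPoly_pow [CharZero K] (k : ℕ) :
    eLift K n (zPoly K n ^ k) = zAlt K n ^ k := by
  rw [eLift_apply]
  simp_rw [map_pow, sgnAct_zPoly, mk_zPoly]
  rw [Finset.sum_const, Finset.card_univ, Fintype.card_perm, Fintype.card_fin,
    ← Nat.cast_smul_eq_nsmul K, smul_smul,
    inv_mul_cancel₀ (by exact_mod_cast Nat.factorial_ne_zero n), one_smul]

lemma part1 [CharZero K] (a : Asq K n) (ha : a ∈ Algebra.adjoin K {zAlt K n})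
    (p : MvPolynomial (Fin n) K) (hp : Ideal.Quotient.mk (sqIdeal K n) p = a) :
    eLift K n p = a := by
  rw [Algebra.adjoin_singleton_eq_range_aeval] at ha
  obtain ⟨f, rfl⟩ := ha
  have hq : Ideal.Quotient.mk (sqIdeal K n) (Polynomial.aeval (zPoly K n) f)
      = Polynomial.aeval (zAlt K n) f := by
    rw [show Ideal.Quotient.mk (sqIdeal K n) (Polynomial.aeval (zPoly K n) f)
        = Ideal.Quotient.mkₐ K (sqIdeal K n) (Polynomial.aeval (zPoly K n) f) from rfl,
      ← Polynomial.aeval_algHom_apply, Ideal.Quotient.mkₐ_eq_mk, mk_zPoly]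
  have he : eLift K n (Polynomial.aeval (zPoly K n) f) = Polynomial.aeval (zAlt K n) f := by
    rw [Polynomial.aeval_eq_sum_range (R := K) (zPoly K n), map_sum]
    simp_rw [map_smul, eLift_zPoly_pow]
    rw [Polynomial.aeval_eq_sum_range (R := K) (zAlt K n)]
  have : (Polynomial.aeval (zAlt K n)).toRingHom f = Polynomial.aeval (zAlt K n) f := rfl
  rw [this] at hp ⊢
  rw [eLift_congr (hp.trans hq.symm), he]


noncomputable def sPoly (K : Type*) [Field K] (n : ℕ) (S : Finset (Fin n)) :
    MvPolynomial (Fin n) K :=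
  ∏ i ∈ S, ((-1) ^ (i : ℕ) * X i)

noncomputable def Bp (K : Type*) [Field K] (n : ℕ) (S : Finset (Fin n)) : Asq K n :=
  Ideal.Quotient.mk (sqIdeal K n) (sPoly K n S)

noncomputable def expS {n : ℕ} (S : Finset (Fin n)) : Fin n →₀ ℕ := ∑ i ∈ S, Finsupp.single i 1

lemma expS_apply {S : Finset (Fin n)} (j : Fin n) :
    expS S j = if j ∈ S then 1 else 0 := by
  classical
  rw [expS, Finsupp.finset_sum_apply]
  simp_rw [Finsupp.single_apply]
  exact Finset.sum_ite_eq' S j (fun _ => 1)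

lemma expS_inj {S T : Finset (Fin n)} (h : expS S = expS T) : S = T := by
  ext j
  have := congrArg (fun f : Fin n →₀ ℕ => f j) h
  simp only [expS_apply] at this
  by_cases hS : j ∈ S <;> by_cases hT : j ∈ T <;> simp_all

lemma sgnAct_sPoly (w : Equiv.Perm (Fin n)) (S : Finset (Fin n)) :
    sgnAct K n w (sPoly K n S) = sPoly K n (S.image w) := by
  rw [sPoly, map_prod]
  simp_rw [sgnAct_s]
  rw [sPoly, Finset.prod_image (fun a _ b _ h => w.injective h)]

lemma sVar_sq (i : Fin n) : sVar K n i * sVar K n i = 0 := by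
  rw [sVar, ← map_mul, Ideal.Quotient.eq_zero_iff_mem]
  have : (-1 : MvPolynomial (Fin n) K) ^ (i:ℕ) * X i * ((-1) ^ (i:ℕ) * X i)
      = ((-1) ^ (i:ℕ) * (-1) ^ (i:ℕ)) * X i ^ 2 := by ring
  rw [this]
  exact Ideal.mul_mem_left _ _ (Ideal.subset_span ⟨i, rfl⟩)

lemma Bp_mul_sVar_of_mem {S : Finset (Fin n)} {i : Fin n} (hi : i ∈ S) :
    Bp K n S * sVar K n i = 0 := by
  rw [Bp, sPoly, ← Finset.prod_erase_mul S _ hi, map_mul]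
  have : Ideal.Quotient.mk (sqIdeal K n) ((-1) ^ (i:ℕ) * X i) = sVar K n i := rfl
  rw [this, mul_assoc, sVar_sq, mul_zero]

lemma Bp_mul_sVar_of_not_mem {S : Finset (Fin n)} {i : Fin n} (hi : i ∉ S) :
    Bp K n S * sVar K n i = Bp K n (insert i S) := by
  rw [Bp, Bp, sPoly, sPoly, Finset.prod_insert hi, map_mul]
  rw [show Ideal.Quotient.mk (sqIdeal K n) ((-1) ^ (i:ℕ) * X i) = sVar K n i from rfl]
  ring

lemma zAlt_pow (k : ℕ) :
    zAlt K n ^ k = (k.factorial : K) • ∑ T ∈ powersetCard k (univ : Finset (Fin n)), Bp K n T := by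
  classical
  induction k with
  | zero =>
    simp only [pow_zero, Nat.factorial_zero, Nat.cast_one, one_smul, powersetCard_zero,
      Finset.sum_singleton]
    rw [Bp, sPoly, Finset.prod_empty, map_one]
  | succ k ih =>
    rw [pow_succ, ih, smul_mul_assoc, zAlt, Finset.sum_mul]
    simp_rw [Finset.mul_sum]
    have hinner : ∀ T ∈ powersetCard k (univ : Finset (Fin n)),
        ∑ i : Fin n, Bp K n T * sVar K n i = ∑ i ∈ Tᶜ, Bp K n (insert i T) := by
      intro T _
      rw [← Finset.sum_add_sum_compl T (fun i => Bp K n T * sVar K n i),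
        Finset.sum_eq_zero (fun i hi => Bp_mul_sVar_of_mem hi), zero_add]
      exact Finset.sum_congr rfl fun i hi => Bp_mul_sVar_of_not_mem (Finset.mem_compl.1 hi)
    rw [Finset.sum_congr rfl hinner]
    have hswap : ∑ T ∈ powersetCard k (univ : Finset (Fin n)), ∑ i ∈ Tᶜ, Bp K n (insert i T)
        = ∑ U ∈ powersetCard (k+1) (univ : Finset (Fin n)), (k+1) • Bp K n U := by
      rw [← Finset.sum_sigma (powersetCard k (univ : Finset (Fin n))) (fun T => Tᶜ)
        (fun x => Bp K n (insert x.2 x.1))]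
      have : ∀ U ∈ powersetCard (k+1) (univ : Finset (Fin n)),
          (k+1) • Bp K n U = ∑ i ∈ U, Bp K n U := by
        intro U hU
        rw [Finset.sum_const, (Finset.mem_powersetCard.1 hU).2]
      rw [Finset.sum_congr rfl this,
        ← Finset.sum_sigma (powersetCard (k+1) (univ : Finset (Fin n))) (fun U => U)
        (fun x => Bp K n x.1)]
      apply Finset.sum_nbij' (i := fun x => ⟨insert x.2 x.1, x.2⟩)
        (j := fun x => ⟨x.1.erase x.2, x.2⟩)
      · rintro ⟨T, i⟩ h
        rw [Finset.mem_sigma] at h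
        obtain ⟨hT, hi⟩ := h
        rw [Finset.mem_compl] at hi
        rw [Finset.mem_sigma, Finset.mem_powersetCard]
        exact ⟨⟨Finset.subset_univ _, by
          rw [Finset.card_insert_of_notMem hi, (Finset.mem_powersetCard.1 hT).2]⟩,
          Finset.mem_insert_self _ _⟩
      · rintro ⟨U, i⟩ h
        rw [Finset.mem_sigma] at h
        obtain ⟨hU, hi⟩ := h
        rw [Finset.mem_sigma, Finset.mem_powersetCard]
        refine ⟨⟨Finset.subset_univ _, ?_⟩, Finset.mem_compl.2 (Finset.notMem_erase _ _)⟩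
        rw [Finset.card_erase_of_mem hi, (Finset.mem_powersetCard.1 hU).2]
        omega
      · rintro ⟨T, i⟩ h
        rw [Finset.mem_sigma] at h
        have hi := Finset.mem_compl.1 h.2
        simp only [Finset.erase_insert hi]
      · rintro ⟨U, i⟩ h
        rw [Finset.mem_sigma] at h
        simp only [Finset.insert_erase h.2]
      · rintro ⟨T, i⟩ _
        rfl
    rw [hswap, Finset.smul_sum]
    rw [Finset.smul_sum]
    apply Finset.sum_congr rfl
    intro U _
    rw [← Nat.cast_smul_eq_nsmul K (k+1), smul_smul, Nat.factorial_succ]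
    push_cast
    ring_nf


lemma sPoly_eq_monomial (S : Finset (Fin n)) :
    sPoly K n S = monomial (expS S) ((-1 : K) ^ (∑ i ∈ S, (i : ℕ))) := by
  classical
  induction S using Finset.induction_on with
  | empty =>
    rw [sPoly, Finset.prod_empty, expS, Finset.sum_empty, Finset.sum_empty, pow_zero]
    rw [monomial_zero', C_1]
  | @insert a S ha ih =>
    have hexp : expS (insert a S) = Finsupp.single a 1 + expS S := by
      rw [expS, expS, Finset.sum_insert ha]
    rw [sPoly, Finset.prod_insert ha, ← sPoly, ih, hexp, Finset.sum_insert ha]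
    have hX : ((-1 : MvPolynomial (Fin n) K) ^ (a : ℕ) * X a)
        = monomial (Finsupp.single a 1) ((-1 : K) ^ (a : ℕ)) := by
      have : ((-1 : MvPolynomial (Fin n) K) ^ (a : ℕ)) = C ((-1 : K) ^ (a : ℕ)) := by
        rw [map_pow, map_neg, map_one]
      rw [this, X, C_mul_monomial, mul_one]
    rw [hX, monomial_mul, pow_add]

lemma coeff_expS_eq_zero_of_mem {q : MvPolynomial (Fin n) K} (hq : q ∈ sqIdeal K n)
    (S : Finset (Fin n)) : coeff (expS S) q = 0 := by
  classical
  rw [sqIdeal, Ideal.span, Submodule.mem_span_range_iff_exists_fun] at hq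
  obtain ⟨c, rfl⟩ := hq
  rw [coeff_sum]
  apply Finset.sum_eq_zero
  intro i _
  rw [smul_eq_mul, X_pow_eq_monomial, coeff_mul_monomial']
  rw [if_neg]
  intro hle
  have := hle i
  rw [Finsupp.single_apply, if_pos rfl, expS_apply] at this
  by_cases h : i ∈ S <;> simp [h] at this

lemma monomial_mem_sqIdeal {m : Fin n →₀ ℕ} {i : Fin n} (hi : 2 ≤ m i) :
    monomial m (1 : K) ∈ sqIdeal K n := by
  have hle : Finsupp.single i 2 ≤ m := by
    intro j
    rw [Finsupp.single_apply]
    by_cases h : i = j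
    · subst h; simpa using hi
    · simp [h]
  have hm : m = Finsupp.single i 2 + (m - Finsupp.single i 2) :=
    (add_tsub_cancel_of_le hle).symm
  rw [hm, ← one_mul (1 : K), ← monomial_mul, ← X_pow_eq_monomial]
  exact Ideal.mul_mem_right _ _ (Ideal.subset_span ⟨i, rfl⟩)

lemma expS_support {m : Fin n →₀ ℕ} (hm : ∀ i, m i ≤ 1) : m = expS m.support := by
  ext j
  rw [expS_apply]
  by_cases h : j ∈ m.support
  · rw [if_pos h]
    have h1 := hm j
    have h2 : m j ≠ 0 := Finsupp.mem_support_iff.1 h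
    omega
  · rw [if_neg h]
    exact Finsupp.notMem_support_iff.1 h

lemma image_perm_eq_powersetCard (S : Finset (Fin n)) :
    (univ : Finset (Equiv.Perm (Fin n))).image (fun w : Equiv.Perm (Fin n) => S.image ⇑w)
      = powersetCard S.card (univ : Finset (Fin n)) := by
  classical
  apply Finset.Subset.antisymm
  · intro T hT
    obtain ⟨w, _, rfl⟩ := Finset.mem_image.1 hT
    rw [Finset.mem_powersetCard]
    exact ⟨Finset.subset_univ _, Finset.card_image_of_injective _ w.injective⟩
  · intro T hT
    have hcard : S.card = T.card := ((Finset.mem_powersetCard.1 hT).2).symm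
    have e := Finset.equivOfCardEq hcard
    set w : Equiv.Perm (Fin n) := Equiv.extendSubtype e with hw
    refine Finset.mem_image.2 ⟨w, Finset.mem_univ _, ?_⟩
    have hsub : S.image w ⊆ T := by
      intro j hj
      obtain ⟨i, hi, rfl⟩ := Finset.mem_image.1 hj
      rw [hw, Equiv.extendSubtype_apply_of_mem e i hi]
      exact (e ⟨i, hi⟩).2
    apply Finset.eq_of_subset_of_card_le hsub
    rw [Finset.card_image_of_injective _ w.injective]
    omega

lemma fiber_card_const (S T : Finset (Fin n))
    (hT : T ∈ powersetCard S.card (univ : Finset (Fin n))) :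
    ((univ : Finset (Equiv.Perm (Fin n))).filter fun w : Equiv.Perm (Fin n) => S.image ⇑w = T).card
      = ((univ : Finset (Equiv.Perm (Fin n))).filter fun w : Equiv.Perm (Fin n) => S.image ⇑w = S).card := by
  classical
  rw [← image_perm_eq_powersetCard S] at hT
  obtain ⟨w₀, _, hw₀⟩ := Finset.mem_image.1 hT
  apply Finset.card_nbij' (i := fun w => w₀⁻¹ * w) (j := fun u => w₀ * u)
  · intro w hw
    rw [Finset.mem_coe, Finset.mem_filter] at hw ⊢
    refine ⟨Finset.mem_univ _, ?_⟩
    have h2 : S.image (⇑(w₀⁻¹ * w)) = (S.image ⇑w).image ⇑w₀⁻¹ := by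
      rw [Finset.image_image]; rfl
    rw [h2, hw.2, ← hw₀, Finset.image_image]
    have hid : ⇑w₀⁻¹ ∘ ⇑w₀ = id := by ext x; simp
    rw [hid, Finset.image_id]
  · intro u hu
    rw [Finset.mem_coe, Finset.mem_filter] at hu ⊢
    refine ⟨Finset.mem_univ _, ?_⟩
    have h2 : S.image (⇑(w₀ * u)) = (S.image ⇑u).image ⇑w₀ := by
      rw [Finset.image_image]; rfl
    rw [h2, hu.2, hw₀]
  · intro w _; simp [← mul_assoc]
  · intro u _; simp [← mul_assoc]

lemma eLift_sPoly_mem [CharZero K] (S : Finset (Fin n)) :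
    eLift K n (sPoly K n S) ∈ Algebra.adjoin K {zAlt K n} := by
  classical
  rw [eLift_apply]
  have h1 : ∀ w : Equiv.Perm (Fin n),
      Ideal.Quotient.mk (sqIdeal K n) (sgnAct K n w (sPoly K n S)) = Bp K n (S.image w) := by
    intro w; rw [sgnAct_sPoly]; rfl
  simp_rw [h1]
  rw [Finset.sum_comp (Bp K n) (fun w : Equiv.Perm (Fin n) => S.image ⇑w), image_perm_eq_powersetCard S]
  set N := ((univ : Finset (Equiv.Perm (Fin n))).filter fun w : Equiv.Perm (Fin n) => S.image ⇑w = S).card with hN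
  rw [Finset.sum_congr rfl (fun T hT => by rw [fiber_card_const S T hT, ← hN])]
  rw [← Finset.smul_sum]
  have hz : ∑ T ∈ powersetCard S.card (univ : Finset (Fin n)), Bp K n T
      = ((S.card.factorial : K)⁻¹) • zAlt K n ^ S.card := by
    rw [zAlt_pow, smul_smul, inv_mul_cancel₀ (by exact_mod_cast Nat.factorial_ne_zero _), one_smul]
  rw [hz]
  have hmem : zAlt K n ^ S.card ∈ Algebra.adjoin K {zAlt K n} :=
    pow_mem (Algebra.self_mem_adjoin_singleton K _) _
  exact Subalgebra.smul_mem _ (nsmul_mem (Subalgebra.smul_mem _ hmem _) N) _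

lemma eLift_mem_adjoin [CharZero K] (p : MvPolynomial (Fin n) K) :
    eLift K n p ∈ Algebra.adjoin K {zAlt K n} := by
  classical
  have hsum : eLift K n p = ∑ m ∈ p.support, eLift K n (monomial m (coeff m p)) := by
    conv_lhs => rw [as_sum p]
    rw [map_sum]
  rw [hsum]
  apply sum_mem
  intro m _
  have hmono : (monomial m) (coeff m p) = coeff m p • monomial m (1 : K) := by
    rw [smul_monomial, smul_eq_mul, mul_one]
  rw [hmono, map_smul]
  apply Subalgebra.smul_mem
  by_cases hsq : ∀ i, m i ≤ 1
  · have hm := expS_support hsq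
    have : monomial m (1 : K)
        = ((-1 : K) ^ (∑ i ∈ m.support, (i : ℕ))) • sPoly K n m.support := by
      rw [sPoly_eq_monomial, smul_monomial, smul_eq_mul, ← pow_add, ← two_mul, pow_mul, neg_one_sq, one_pow,
        ← hm]
    rw [this, map_smul]
    exact Subalgebra.smul_mem _ (eLift_sPoly_mem _) _
  · push_neg at hsq
    obtain ⟨i, hi⟩ := hsq
    rw [eLift_eq_zero_of_mem (monomial_mem_sqIdeal (i := i) (by omega))]
    exact Subalgebra.zero_mem _


lemma zAlt_pow_linearIndependent [CharZero K] :
    LinearIndependent K (fun k : Fin (n + 1) => zAlt K n ^ (k : ℕ)) := by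
  classical
  rw [Fintype.linearIndependent_iff]
  intro g hg j
  obtain ⟨T, hTsub, hT⟩ := Finset.exists_subset_card_eq
    (s := (univ : Finset (Fin n))) (n := (j : ℕ))
    (by simpa using Nat.lt_succ_iff.1 j.isLt)
  set mkL := (Ideal.Quotient.mkₐ K (sqIdeal K n)).toLinearMap with hmkL
  set P : MvPolynomial (Fin n) K := ∑ k : Fin (n + 1), (g k * (k : ℕ).factorial) •
      ∑ T' ∈ powersetCard (k : ℕ) (univ : Finset (Fin n)),
        monomial (expS T') ((-1 : K) ^ (∑ i ∈ T', (i : ℕ))) with hP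
  have hmk : mkL P = ∑ k : Fin (n + 1), g k • zAlt K n ^ (k : ℕ) := by
    rw [hP, map_sum]
    apply Finset.sum_congr rfl
    intro k _
    rw [map_smul, map_sum, zAlt_pow, smul_smul]
    congr 1
    apply Finset.sum_congr rfl
    intro T' _
    rw [← sPoly_eq_monomial, hmkL]
    simp only [AlgHom.toLinearMap_apply, Ideal.Quotient.mkₐ_eq_mk]
    rfl
  have hPmem : P ∈ sqIdeal K n := by
    apply Ideal.Quotient.eq_zero_iff_mem.1
    have : Ideal.Quotient.mk (sqIdeal K n) P = mkL P := rfl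
    rw [this, hmk, hg]
  have hco := coeff_expS_eq_zero_of_mem hPmem T
  have hterm : ∀ k : Fin (n + 1),
      coeff (expS T) ((g k * (k : ℕ).factorial) •
        ∑ T' ∈ powersetCard (k : ℕ) (univ : Finset (Fin n)),
          monomial (expS T') ((-1 : K) ^ (∑ i ∈ T', (i : ℕ))))
      = if k = j then g k * (k : ℕ).factorial * (-1 : K) ^ (∑ i ∈ T, (i : ℕ)) else 0 := by
    intro k
    rw [coeff_smul, coeff_sum]
    simp_rw [coeff_monomial]
    have hcond : ∀ T' : Finset (Fin n), (expS T' = expS T) = (T' = T) :=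
      fun T' => propext ⟨expS_inj, fun h => by rw [h]⟩
    simp_rw [hcond]
    rw [Finset.sum_ite_eq' (powersetCard (k : ℕ) (univ : Finset (Fin n))) T, smul_eq_mul]
    by_cases hkj : k = j
    · subst hkj
      rw [if_pos (Finset.mem_powersetCard.2 ⟨Finset.subset_univ _, hT⟩), if_pos rfl, mul_assoc]
    · rw [if_neg, if_neg hkj, mul_zero]
      intro hmem
      exact hkj (Fin.ext (((Finset.mem_powersetCard.1 hmem).2).symm.trans hT))
  have hcoeff : coeff (expS T) P
      = g j * ((j : ℕ).factorial) * (-1 : K) ^ (∑ i ∈ T, (i : ℕ)) := by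
    rw [hP, coeff_sum]
    simp_rw [hterm]
    rw [Finset.sum_ite_eq' (univ : Finset (Fin (n + 1))) j, if_pos (Finset.mem_univ j)]
  have h := hcoeff.symm.trans hco
  rcases mul_eq_zero.1 h with h' | h'
  · rcases mul_eq_zero.1 h' with h'' | h''
    · exact h''
    · exact absurd h'' (by exact_mod_cast Nat.factorial_ne_zero _)
  · exact absurd h' (pow_ne_zero _ (neg_ne_zero.2 one_ne_zero))

lemma zAlt_pow_succ_eq_zero : zAlt K n ^ (n + 1) = 0 := by
  rw [zAlt_pow, Finset.powersetCard_eq_empty.2 (by simp), Finset.sum_empty, smul_zero]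

lemma adjoin_eq_span [CharZero K] :
    Subalgebra.toSubmodule (Algebra.adjoin K {zAlt K n})
      = Submodule.span K (Set.range fun k : Fin (n + 1) => zAlt K n ^ (k : ℕ)) := by
  apply le_antisymm
  · intro a ha
    rw [Subalgebra.mem_toSubmodule, Algebra.adjoin_singleton_eq_range_aeval] at ha
    obtain ⟨f, rfl⟩ := ha
    have : (Polynomial.aeval (zAlt K n)).toRingHom f = Polynomial.aeval (zAlt K n) f := rfl
    rw [this, Polynomial.aeval_eq_sum_range]
    apply Submodule.sum_mem
    intro i _
    apply Submodule.smul_mem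
    by_cases hi : i ≤ n
    · exact Submodule.subset_span ⟨⟨i, by omega⟩, rfl⟩
    · have hz : zAlt K n ^ i = 0 := by
        rw [show i = (n + 1) + (i - (n + 1)) by omega, pow_add, zAlt_pow_succ_eq_zero, zero_mul]
      rw [hz]
      exact Submodule.zero_mem _
  · rw [Submodule.span_le]
    rintro _ ⟨k, rfl⟩
    simp only [SetLike.mem_coe, Subalgebra.mem_toSubmodule]
    exact pow_mem (Algebra.self_mem_adjoin_singleton K _) _

lemma part2eq [CharZero K] :
    LinearMap.range (eLift K n) = Subalgebra.toSubmodule (Algebra.adjoin K {zAlt K n}) := by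
  apply le_antisymm
  · rintro _ ⟨p, rfl⟩
    exact (Subalgebra.mem_toSubmodule _).2 (eLift_mem_adjoin p)
  · intro a ha
    obtain ⟨p, hp⟩ := Ideal.Quotient.mk_surjective a
    exact ⟨p, part1 a ((Subalgebra.mem_toSubmodule _).1 ha) p hp⟩


end Aux

theorem statement14 (K : Type*) [Field K] [CharZero K] (n : ℕ) :
    (∀ a ∈ Algebra.adjoin K {zAlt K n}, ∀ p : MvPolynomial (Fin n) K,
        Ideal.Quotient.mk (sqIdeal K n) p = a → eLift K n p = a) ∧
    LinearMap.range (eLift K n) =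
      Subalgebra.toSubmodule (Algebra.adjoin K {zAlt K n}) ∧
    Module.finrank K (LinearMap.range (eLift K n)) = n + 1 := by
  refine ⟨fun a ha p hp => part1 a ha p hp, part2eq, ?_⟩
  rw [part2eq, adjoin_eq_span, finrank_span_eq_card zAlt_pow_linearIndependent]
  simp
end

section
/- Let B be the set of 'standard' dotted cap diagrams on m+n points: planar perfect matchings of {1,…,m+n} by non-crossing arcs, each arc either dotted or undotted, such that every dotted arc is adjacent to the unbounded region (no dotted arc nested under another arc) — evaluated as linear functionals on A = K[x₁,…,x_{m+n}]/(xᵢ²) by sending each undotted cap {a<b} to the functional x_a ↦ 1, x_b ↦ 1, 1 ↦ 0, x_a x_b ↦ 0, and each dotted cap to the functional 1 ↦ 1, x_a ↦ 0, x_b ↦ 0 on its two tensor factors. Then these functionals are linearly independent in the dual of A. -/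
/-!
STATEMENT 19: Let `B` be the set of standard dotted cap diagrams on `N = m + n`
points: planar (non-crossing) perfect matchings by arcs, each arc dotted or
undotted, with no dotted arc nested under another arc.  Each diagram acts as a
linear functional on `A = (K[x]/(x²))^{⊗N}` by tensoring, over its arcs, the
cap functionals (undotted cap `{a<b}`: `1 ↦ 0`, `x_a ↦ 1`, `x_b ↦ 1`,
`x_a x_b ↦ 0`; dotted cap: `1 ↦ 1`, `x_a, x_b ↦ 0`).  These functionals are
linearly independent in the dual of `A`.

Formalization: a functional on `A` is determined by its values on the monomial
basis of `A`, indexed by subsets `S ⊆ {1,…,N}`; the value of the diagram `D` on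
the monomial `x_S` is the product over arcs of the corresponding cap values.
Linear independence in the dual of `A` is linear independence of these value
functions `Finset (Fin N) → K`.
-/

/-- A standard dotted cap diagram on `N` boundary points. -/
structure CapDiagram (N : ℕ) where
  /-- the arcs, recorded as pairs `(a, b)` with `a < b` -/
  arcs : Finset (Fin N × Fin N)
  /-- the subset of dotted arcs -/
  dotted : Finset (Fin N × Fin N)
  lt : ∀ p ∈ arcs, p.1 < p.2
  /-- perfect matching: every point lies on exactly one arc -/
  matching : ∀ i : Fin N, ∃! p, p ∈ arcs ∧ (p.1 = i ∨ p.2 = i)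
  /-- planarity: arcs do not cross -/
  noncross : ∀ p ∈ arcs, ∀ q ∈ arcs, ¬(p.1 < q.1 ∧ q.1 < p.2 ∧ p.2 < q.2)
  dotted_sub : dotted ⊆ arcs
  /-- every dot is adjacent to the unbounded region: no dotted arc is nested
  under another arc -/
  no_nested_dot : ∀ p ∈ dotted, ∀ q ∈ arcs, ¬(q.1 < p.1 ∧ p.2 < q.2)

/-- The value of the functional attached to the diagram `D` on the square-free
monomial `x_S`: the product over arcs of the cap values. -/
def capEval (K : Type*) [Field K] {N : ℕ} (D : CapDiagram N) (S : Finset (Fin N)) : K :=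
  ∏ p ∈ D.arcs,
    if p ∈ D.dotted then (if p.1 ∉ S ∧ p.2 ∉ S then 1 else 0)
    else (if (p.1 ∈ S ∧ p.2 ∉ S) ∨ (p.1 ∉ S ∧ p.2 ∈ S) then 1 else 0)

namespace S19

variable {N : ℕ}

/-- left endpoints of undotted arcs -/
def lset (a d : Finset (Fin N × Fin N)) : Finset (Fin N) := (a \ d).image Prod.fst

structure Std (V : Finset (Fin N)) (a d : Finset (Fin N × Fin N)) : Prop where
  lt : ∀ p ∈ a, p.1 < p.2
  memV : ∀ p ∈ a, p.1 ∈ V ∧ p.2 ∈ V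
  matching : ∀ i ∈ V, ∃! p, p ∈ a ∧ (p.1 = i ∨ p.2 = i)
  noncross : ∀ p ∈ a, ∀ q ∈ a, ¬(p.1 < q.1 ∧ q.1 < p.2 ∧ p.2 < q.2)
  dsub : d ⊆ a
  nnd : ∀ p ∈ d, ∀ q ∈ a, ¬(q.1 < p.1 ∧ p.2 < q.2)

lemma Std.shared {V : Finset (Fin N)} {a d : Finset (Fin N × Fin N)} (h : Std V a d)
    {p q : Fin N × Fin N} (hp : p ∈ a) (hq : q ∈ a) {i : Fin N}
    (hpi : p.1 = i ∨ p.2 = i) (hqi : q.1 = i ∨ q.2 = i) : p = q := by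
  have hiV : i ∈ V := by
    rcases hpi with h1 | h1
    · exact h1 ▸ (h.memV p hp).1
    · exact h1 ▸ (h.memV p hp).2
  obtain ⟨r, _, hu⟩ := h.matching i hiV
  rw [hu p ⟨hp, hpi⟩, hu q ⟨hq, hqi⟩]

/-- if nothing in `lset` lies strictly to the right of `p.1`, then the arc `p`
has no point of `V` strictly under it. -/
lemma no_interior {V : Finset (Fin N)} {a d : Finset (Fin N × Fin N)} (h : Std V a d)
    {p : Fin N × Fin N} (hp : p ∈ a) (hno : ∀ x ∈ lset a d, x ≤ p.1) :
    ∀ v ∈ V, ¬ (p.1 < v ∧ v < p.2) := by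
  rintro v hv ⟨h1, h2⟩
  obtain ⟨q, ⟨hq, hqv⟩, _⟩ := h.matching v hv
  have hqp : q ≠ p := by
    rintro rfl
    rcases hqv with h' | h' <;> subst h'
    · exact lt_irrefl _ h1
    · exact lt_irrefl _ h2
  -- q is nested strictly inside p
  have hnest : p.1 < q.1 ∧ q.2 < p.2 := by
    rcases hqv with h' | h'
    · -- v = q.1
      subst h'
      refine ⟨h1, ?_⟩
      rcases lt_trichotomy q.2 p.2 with hlt | heq | hgt
      · exact hlt
      · exact absurd (h.shared hq hp (Or.inr heq) (Or.inr rfl)) hqp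
      · exact absurd ⟨h1, h2, hgt⟩ (h.noncross p hp q hq)
    · -- v = q.2
      subst h'
      refine ⟨?_, h2⟩
      rcases lt_trichotomy q.1 p.1 with hlt | heq | hgt
      · exact absurd ⟨hlt, h1, h2⟩ (h.noncross q hq p hp)
      · exact absurd (h.shared hq hp (Or.inl heq) (Or.inl rfl)) hqp
      · exact hgt
  by_cases hqd : q ∈ d
  · exact h.nnd q hqd p hp hnest
  · have : q.1 ∈ lset a d := Finset.mem_image_of_mem _ (Finset.mem_sdiff.2 ⟨hq, hqd⟩)
    exact absurd hnest.1 (not_lt.2 (hno _ this))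

lemma erase_std {V : Finset (Fin N)} {a d : Finset (Fin N × Fin N)} (h : Std V a d)
    {p : Fin N × Fin N} (hp : p ∈ a) :
    Std (V \ {p.1, p.2}) (a.erase p) (d.erase p) := by
  have hep : ∀ q ∈ a, q ≠ p → q.1 ≠ p.1 ∧ q.1 ≠ p.2 ∧ q.2 ≠ p.1 ∧ q.2 ≠ p.2 := by
    intro q hq hqp
    refine ⟨fun he => ?_, fun he => ?_, fun he => ?_, fun he => ?_⟩
    · exact hqp (h.shared hq hp (Or.inl he) (Or.inl rfl))
    · exact hqp (h.shared hq hp (Or.inl he) (Or.inr rfl))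
    · exact hqp (h.shared hq hp (Or.inr he) (Or.inl rfl))
    · exact hqp (h.shared hq hp (Or.inr he) (Or.inr rfl))
  constructor
  · exact fun q hq => h.lt q (Finset.mem_of_mem_erase hq)
  · intro q hq
    obtain ⟨hqp, hqa⟩ := Finset.mem_erase.1 hq
    obtain ⟨h1, h2, h3, h4⟩ := hep q hqa hqp
    have := h.memV q hqa
    simp only [Finset.mem_sdiff, Finset.mem_insert, Finset.mem_singleton]
    exact ⟨⟨this.1, by tauto⟩, ⟨this.2, by tauto⟩⟩
  · intro i hi
    simp only [Finset.mem_sdiff, Finset.mem_insert, Finset.mem_singleton] at hi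
    obtain ⟨hiV, hi12⟩ := hi
    obtain ⟨q, ⟨⟨hqa, hqi⟩, hqu⟩⟩ := h.matching i hiV
    have hqp : q ≠ p := by
      rintro rfl
      rcases hqi with h' | h' <;> simp [h'] at hi12
    refine ⟨q, ⟨Finset.mem_erase.2 ⟨hqp, hqa⟩, hqi⟩, ?_⟩
    intro r hr
    exact hqu r ⟨Finset.mem_of_mem_erase hr.1, hr.2⟩
  · intro q hq r hr
    exact h.noncross q (Finset.mem_of_mem_erase hq) r (Finset.mem_of_mem_erase hr)
  · exact Finset.erase_subset_erase _ h.dsub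
  · intro q hq r hr
    exact h.nnd q (Finset.mem_of_mem_erase hq) r (Finset.mem_of_mem_erase hr)

lemma lset_erase {V : Finset (Fin N)} {a d : Finset (Fin N × Fin N)} (h : Std V a d)
    {p : Fin N × Fin N} (hp : p ∈ a) :
    lset (a.erase p) (d.erase p) = (lset a d).erase p.1 := by
  ext x
  simp only [lset, Finset.mem_image, Finset.mem_erase, Finset.mem_sdiff]
  constructor
  · rintro ⟨q, ⟨⟨hqp, hqa⟩, hqd⟩, rfl⟩
    have hqd' : q ∉ d := fun hx => hqd ⟨hqp, hx⟩
    refine ⟨fun he => hqp (h.shared hqa hp (Or.inl he) (Or.inl rfl)), q, ⟨hqa, hqd'⟩, rfl⟩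
  · rintro ⟨hx, q, ⟨hqa, hqd⟩, rfl⟩
    have hqp : q ≠ p := fun he => hx (by rw [he])
    exact ⟨q, ⟨⟨hqp, hqa⟩, fun hc => hqd hc.2⟩, rfl⟩

/-- a standard diagram is determined by the set of left endpoints of its
undotted arcs. -/
lemma unique : ∀ (k : ℕ) (V : Finset (Fin N)) (a d a' d' : Finset (Fin N × Fin N)),
    V.card = k → Std V a d → Std V a' d' → lset a d = lset a' d' →
    a = a' ∧ d = d' := by
  intro k
  induction k using Nat.strong_induction_on with
  | _ k ih =>
  intro V a d a' d' hk h h' hl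
  rcases Finset.eq_empty_or_nonempty V with hV | hV
  · subst hV
    have ha : a = ∅ := Finset.eq_empty_of_forall_notMem fun q hq =>
      absurd (h.memV q hq).1 (Finset.notMem_empty _)
    have ha' : a' = ∅ := Finset.eq_empty_of_forall_notMem fun q hq =>
      absurd (h'.memV q hq).1 (Finset.notMem_empty _)
    have hd : d = ∅ := Finset.subset_empty.1 (ha ▸ h.dsub)
    have hd' : d' = ∅ := Finset.subset_empty.1 (ha' ▸ h'.dsub)
    exact ⟨ha.trans ha'.symm, hd.trans hd'.symm⟩
  -- find the common pivot arc p, p'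
  · have hpiv : ∃ p p', p ∈ a ∧ p' ∈ a' ∧ p = p' ∧
        ((p ∈ d ∧ p' ∈ d') ∨ (p ∉ d ∧ p' ∉ d')) := by
      by_cases hS : lset a d = ∅
      · -- all arcs dotted; pivot at min of V
        have hS' : lset a' d' = ∅ := hl ▸ hS
        have hda : d = a := by
          refine le_antisymm h.dsub fun q hq => ?_
          by_contra hqd
          have hmem : q.1 ∈ lset a d :=
            Finset.mem_image_of_mem Prod.fst (Finset.mem_sdiff.2 ⟨hq, hqd⟩)
          rw [hS] at hmem
          exact Finset.notMem_empty _ hmem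
        have hda' : d' = a' := by
          refine le_antisymm h'.dsub fun q hq => ?_
          by_contra hqd
          have hmem : q.1 ∈ lset a' d' :=
            Finset.mem_image_of_mem Prod.fst (Finset.mem_sdiff.2 ⟨hq, hqd⟩)
          rw [hS'] at hmem
          exact Finset.notMem_empty _ hmem
        obtain ⟨s, hsmin⟩ : ∃ s : Fin N, s = V.min' hV := ⟨_, rfl⟩
        have hsV : s ∈ V := by rw [hsmin]; exact V.min'_mem hV
        have hsle : ∀ x ∈ V, s ≤ x := by
          intro x hx; rw [hsmin]; exact V.min'_le x hx
        obtain ⟨p, ⟨⟨hpa, hpi⟩, _⟩⟩ := h.matching s hsV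
        obtain ⟨p', ⟨⟨hpa', hpi'⟩, _⟩⟩ := h'.matching s hsV
        have hp1 : p.1 = s := by
          rcases hpi with h1 | h1
          · exact h1
          · exfalso
            have hlt := h.lt p hpa
            rw [h1] at hlt
            exact absurd (hsle p.1 (h.memV p hpa).1) (not_le.2 hlt)
        have hp1' : p'.1 = s := by
          rcases hpi' with h1 | h1
          · exact h1
          · exfalso
            have hlt := h'.lt p' hpa'
            rw [h1] at hlt
            exact absurd (hsle p'.1 (h'.memV p' hpa').1) (not_le.2 hlt)
        have hint : ∀ v ∈ V, ¬ (p.1 < v ∧ v < p.2) :=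
          no_interior h hpa (fun x hx => absurd (hS ▸ hx) (Finset.notMem_empty x))
        have hint' : ∀ v ∈ V, ¬ (p'.1 < v ∧ v < p'.2) :=
          no_interior h' hpa' (fun x hx => absurd (hS' ▸ hx) (Finset.notMem_empty x))
        have hp2 : p.2 = p'.2 := by
          rcases lt_trichotomy p.2 p'.2 with hc | hc | hc
          · refine absurd (hint' p.2 (h.memV p hpa).2 ⟨?_, hc⟩) not_false
            rw [hp1', ← hp1]; exact h.lt p hpa
          · exact hc
          · refine absurd (hint p'.2 (h'.memV p' hpa').2 ⟨?_, hc⟩) not_false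
            rw [hp1, ← hp1']; exact h'.lt p' hpa'
        have hpp : p = p' := Prod.ext (hp1.trans hp1'.symm) hp2
        exact ⟨p, p', hpa, hpa', hpp,
          Or.inl ⟨by rw [hda]; exact hpa, by rw [hda']; exact hpa'⟩⟩
      · -- pivot at max of lset
        have hSn : (lset a d).Nonempty := Finset.nonempty_of_ne_empty hS
        obtain ⟨s, hsmax⟩ : ∃ s : Fin N, s = (lset a d).max' hSn := ⟨_, rfl⟩
        have hsS : s ∈ lset a d := by rw [hsmax]; exact (lset a d).max'_mem hSn
        have hsle : ∀ x ∈ lset a d, x ≤ s := by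
          intro x hx; rw [hsmax]; exact (lset a d).le_max' x hx
        obtain ⟨p, hpU, hp1⟩ := Finset.mem_image.1 hsS
        have hpa : p ∈ a := (Finset.mem_sdiff.1 hpU).1
        have hpd : p ∉ d := (Finset.mem_sdiff.1 hpU).2
        have hsS' : s ∈ lset a' d' := by rw [← hl]; exact hsS
        obtain ⟨p', hpU', hp1'⟩ := Finset.mem_image.1 hsS'
        have hpa' : p' ∈ a' := (Finset.mem_sdiff.1 hpU').1
        have hpd' : p' ∉ d' := (Finset.mem_sdiff.1 hpU').2
        have hno : ∀ x ∈ lset a d, x ≤ p.1 := by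
          intro x hx; rw [hp1]; exact hsle x hx
        have hno' : ∀ x ∈ lset a' d', x ≤ p'.1 := by
          intro x hx; rw [hp1']; rw [← hl] at hx; exact hsle x hx
        have hint := no_interior h hpa hno
        have hint' := no_interior h' hpa' hno'
        have hp2 : p.2 = p'.2 := by
          rcases lt_trichotomy p.2 p'.2 with hc | hc | hc
          · refine absurd (hint' p.2 (h.memV p hpa).2 ⟨?_, hc⟩) not_false
            rw [hp1', ← hp1]; exact h.lt p hpa
          · exact hc
          · refine absurd (hint p'.2 (h'.memV p' hpa').2 ⟨?_, hc⟩) not_false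
            rw [hp1, ← hp1']; exact h'.lt p' hpa'
        exact ⟨p, p', hpa, hpa', Prod.ext (hp1.trans hp1'.symm) hp2, Or.inr ⟨hpd, hpd'⟩⟩
    obtain ⟨p, p', hpa, hpa', rfl, hdd⟩ := hpiv
    have hne : p.1 ≠ p.2 := ne_of_lt (h.lt p hpa)
    have hsub : {p.1, p.2} ⊆ V := by
      intro x hx
      rcases Finset.mem_insert.1 hx with rfl | hx
      · exact (h.memV p hpa).1
      · rw [Finset.mem_singleton.1 hx]; exact (h.memV p hpa).2
    have hcard : (V \ {p.1, p.2}).card < k := by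
      rw [Finset.card_sdiff_of_subset hsub, Finset.card_insert_of_notMem (by simpa using hne),
        Finset.card_singleton]
      have h2 : 2 ≤ V.card := by
        calc 2 = ({p.1, p.2} : Finset (Fin N)).card := by
              rw [Finset.card_insert_of_notMem (by simpa using hne), Finset.card_singleton]
          _ ≤ V.card := Finset.card_le_card hsub
      omega
    have hIH := ih _ (hk ▸ hcard) (V \ {p.1, p.2}) (a.erase p) (d.erase p)
      (a'.erase p) (d'.erase p) rfl (erase_std h hpa) (erase_std h' hpa')
      (by rw [lset_erase h hpa, lset_erase h' hpa', hl])
    constructor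
    · rw [← Finset.insert_erase hpa, ← Finset.insert_erase hpa', hIH.1]
    · rcases hdd with ⟨h1, h2⟩ | ⟨h1, h2⟩
      · rw [← Finset.insert_erase h1, ← Finset.insert_erase h2, hIH.2]
      · rw [← Finset.erase_eq_of_notMem h1, ← Finset.erase_eq_of_notMem h2, hIH.2]

end S19
namespace S19

variable {N : ℕ}

def lsD (D : CapDiagram N) : Finset (Fin N) := lset D.arcs D.dotted

def tstat (D : CapDiagram N) : ℕ := ∑ p ∈ D.arcs \ D.dotted, (p.1 : ℕ)

lemma std (D : CapDiagram N) : Std Finset.univ D.arcs D.dotted :=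
  ⟨D.lt, fun p _ => ⟨Finset.mem_univ _, Finset.mem_univ _⟩, fun i _ => D.matching i,
    D.noncross, D.dotted_sub, D.no_nested_dot⟩

noncomputable def arcAt (D : CapDiagram N) (i : Fin N) : Fin N × Fin N :=
  (D.matching i).choose

lemma arcAt_spec (D : CapDiagram N) (i : Fin N) :
    arcAt D i ∈ D.arcs ∧ ((arcAt D i).1 = i ∨ (arcAt D i).2 = i) :=
  (D.matching i).choose_spec.1

lemma arcAt_eq {D : CapDiagram N} {p : Fin N × Fin N} {i : Fin N}
    (hp : p ∈ D.arcs) (hi : p.1 = i ∨ p.2 = i) : p = arcAt D i :=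
  (D.matching i).choose_spec.2 p ⟨hp, hi⟩

lemma snd_notMem_lsD {D : CapDiagram N} {p : Fin N × Fin N} (hp : p ∈ D.arcs) :
    p.2 ∉ lsD D := by
  intro hc
  obtain ⟨q, hqU, hq1⟩ := Finset.mem_image.1 hc
  have hq : q = p :=
    (std D).shared (Finset.mem_sdiff.1 hqU).1 hp (Or.inl hq1) (Or.inr rfl)
  have hpp : p.1 = p.2 := by rw [← hq1, hq]
  exact absurd (D.lt p hp) (by rw [hpp]; exact lt_irrefl _)

lemma capEval_self (K : Type*) [Field K] (D : CapDiagram N) :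
    capEval K D (lsD D) = 1 := by
  unfold capEval
  apply Finset.prod_eq_one
  intro p hp
  have h2 : p.2 ∉ lsD D := snd_notMem_lsD hp
  by_cases hd : p ∈ D.dotted
  · have h1 : p.1 ∉ lsD D := by
      intro hc
      obtain ⟨q, hqU, hq1⟩ := Finset.mem_image.1 hc
      have hq : q = p :=
        (std D).shared (Finset.mem_sdiff.1 hqU).1 hp (Or.inl hq1) (Or.inl rfl)
      exact (Finset.mem_sdiff.1 hqU).2 (hq ▸ hd)
    rw [if_pos hd, if_pos ⟨h1, h2⟩]
  · have h1 : p.1 ∈ lsD D :=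
      Finset.mem_image_of_mem _ (Finset.mem_sdiff.2 ⟨hp, hd⟩)
    rw [if_neg hd, if_pos (Or.inl ⟨h1, h2⟩)]

lemma factors_one {K : Type*} [Field K] {D : CapDiagram N} {S : Finset (Fin N)}
    (hne : capEval K D S ≠ 0) :
    ∀ p ∈ D.arcs, (p ∈ D.dotted → p.1 ∉ S ∧ p.2 ∉ S) ∧
      (p ∉ D.dotted → ((p.1 ∈ S ∧ p.2 ∉ S) ∨ (p.1 ∉ S ∧ p.2 ∈ S))) := by
  intro p hp
  constructor
  · intro hd
    by_contra hc
    exact hne (by unfold capEval; exact Finset.prod_eq_zero hp (by rw [if_pos hd, if_neg hc]))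
  · intro hd
    by_contra hc
    exact hne (by unfold capEval; exact Finset.prod_eq_zero hp (by rw [if_neg hd, if_neg hc]))

lemma ext' {D D' : CapDiagram N} (h1 : D.arcs = D'.arcs) (h2 : D.dotted = D'.dotted) :
    D = D' := by
  cases D
  cases D'
  dsimp at h1 h2
  subst h1
  subst h2
  rfl

lemma key {K : Type*} [Field K] {D D' : CapDiagram N}
    (hne : capEval K D' (lsD D) ≠ 0) :
    tstat D' ≤ tstat D ∧ (tstat D' = tstat D → D' = D) := by
  classical
  have hfac := factors_one hne
  set S := lsD D with hS
  -- for s ∈ S, the arc of D' at s is undotted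
  have hj : ∀ s ∈ S, arcAt D' s ∈ D'.arcs \ D'.dotted := by
    intro s hsS
    obtain ⟨hmem, hend⟩ := arcAt_spec D' s
    refine Finset.mem_sdiff.2 ⟨hmem, fun hd => ?_⟩
    obtain ⟨h1, h2⟩ := (hfac _ hmem).1 hd
    rcases hend with h' | h'
    · exact h1 (by rw [h']; exact hsS)
    · exact h2 (by rw [h']; exact hsS)
  have hi : ∀ p ∈ D'.arcs \ D'.dotted, (if p.1 ∈ S then p.1 else p.2) ∈ S := by
    intro p hp
    obtain ⟨hpa, hpd⟩ := Finset.mem_sdiff.1 hp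
    rcases (hfac p hpa).2 hpd with ⟨ha, _⟩ | ⟨ha, hb⟩
    · rw [if_pos ha]; exact ha
    · rw [if_neg ha]; exact hb
  have hleft : ∀ p ∈ D'.arcs \ D'.dotted, arcAt D' (if p.1 ∈ S then p.1 else p.2) = p := by
    intro p hp
    have hpa : p ∈ D'.arcs := (Finset.mem_sdiff.1 hp).1
    by_cases hc : p.1 ∈ S
    · rw [if_pos hc]; exact (arcAt_eq hpa (Or.inl rfl)).symm
    · rw [if_neg hc]; exact (arcAt_eq hpa (Or.inr rfl)).symm
  have hright : ∀ s ∈ S, (if (arcAt D' s).1 ∈ S then (arcAt D' s).1 else (arcAt D' s).2) = s := by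
    intro s hsS
    obtain ⟨hmem, hend⟩ := arcAt_spec D' s
    have hnd : arcAt D' s ∉ D'.dotted := (Finset.mem_sdiff.1 (hj s hsS)).2
    rcases (hfac _ hmem).2 hnd with ⟨ha, hb⟩ | ⟨ha, hb⟩
    · rw [if_pos ha]
      rcases hend with h' | h'
      · exact h'
      · exact absurd (by rw [h']; exact hsS) hb
    · rw [if_neg ha]
      rcases hend with h' | h'
      · exact absurd (by rw [h']; exact hsS) ha
      · exact h'
  have hsum : tstat D' = ∑ s ∈ S, ((arcAt D' s).1 : ℕ) := by
    unfold tstat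
    refine Finset.sum_bij' (fun p _ => if p.1 ∈ S then p.1 else p.2)
      (fun s _ => arcAt D' s) hi hj hleft hright ?_
    intro p hp
    rw [hleft p hp]
  have htD : tstat D = ∑ s ∈ S, (s : ℕ) := by
    unfold tstat
    rw [hS]
    unfold lsD lset
    exact (Finset.sum_image (fun x hx y hy hxy =>
      (std D).shared (Finset.mem_sdiff.1 hx).1 (Finset.mem_sdiff.1 hy).1
        (Or.inl hxy) (Or.inl rfl))).symm
  have hle : ∀ s ∈ S, ((arcAt D' s).1 : ℕ) ≤ (s : ℕ) := by
    intro s hsS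
    obtain ⟨hmem, hend⟩ := arcAt_spec D' s
    rcases hend with h' | h'
    · rw [h']
    · have := D'.lt _ hmem
      rw [h'] at this
      exact le_of_lt this
  constructor
  · rw [hsum, htD]
    exact Finset.sum_le_sum hle
  · intro heq
    rw [hsum, htD] at heq
    have hpt := (Finset.sum_eq_sum_iff_of_le hle).1 heq
    have hfst : ∀ s ∈ S, (arcAt D' s).1 = s := fun s hsS => Fin.ext (hpt s hsS)
    have hlset : lset D'.arcs D'.dotted = lset D.arcs D.dotted := by
      have hSS : lset D.arcs D.dotted = S := rfl
      rw [hSS]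
      ext x
      constructor
      · intro hx
        obtain ⟨p, hpU, rfl⟩ := Finset.mem_image.1 hx
        have he := hi p hpU
        have hap := hleft p hpU
        have := hfst _ he
        rw [hap] at this
        rw [this]
        exact he
      · intro hx
        have hm := hj x hx
        have hx' : x ∈ Finset.image Prod.fst (D'.arcs \ D'.dotted) := by
          rw [← hfst x hx]
          exact Finset.mem_image_of_mem _ hm
        exact hx'
    have huniq := unique Finset.univ.card Finset.univ D'.arcs D'.dotted D.arcs D.dotted
      rfl (std D') (std D) hlset
    exact ext' huniq.1 huniq.2

end S19

theorem statement19 (K : Type*) [Field K] [CharZero K] (m n : ℕ) :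
    LinearIndependent K
      (fun D : CapDiagram (m + n) => (fun S : Finset (Fin (m + n)) => capEval K D S)) := by
  classical
  rw [linearIndependent_iff']
  intro s g hrel
  have main : ∀ (k : ℕ) (D : CapDiagram (m + n)), D ∈ s → S19.tstat D < k → g D = 0 := by
    intro k
    induction k with
    | zero => exact fun D _ hlt => absurd hlt (Nat.not_lt_zero _)
    | succ k ih =>
      intro D hD hlt
      have h0 := congrFun hrel (S19.lsD D)
      rw [Finset.sum_apply] at h0
      simp only [Pi.smul_apply, smul_eq_mul, Pi.zero_apply] at h0
      rw [Finset.sum_eq_single D ?h1 ?h2] at h0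
      · rw [S19.capEval_self, mul_one] at h0
        exact h0
      case h1 =>
        intro D' hD' hne
        by_cases hz : capEval K D' (S19.lsD D) = 0
        · rw [hz, mul_zero]
        · have hk := S19.key hz
          have hlt' : S19.tstat D' < S19.tstat D :=
            lt_of_le_of_ne hk.1 fun he => hne (hk.2 he)
          rw [ih D' hD' (by omega), zero_mul]
      case h2 => exact fun hc => (hc hD).elim
  intro D hD
  exact main (S19.tstat D + 1) D hD (Nat.lt_succ_self _)
end
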